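/- arXiv:1001.3545 — 2 statements merged into one kernel-verified Lean document; each statement's English description precedes it below -/
import Mathlib

section
/- Let A be a commutative K-algebra with K-basis B = {b_i : i ≥ 1}, and fix C = {b₁,…,bₙ} ⊆ B. Call b ∈ B C-free if b ∉ b_i·B for every b_i ∈ C. Assume: (i) b_i·B ⊆ B for all b_i ∈ C, and (ii) if b₁^{z₁}⋯bₙ^{zₙ}·b = b₁^{z₁'}⋯bₙ^{zₙ'}·b' for nonnegative integers z_i, z_i' and C-free elements b, b' ∈ B, then b = b' and z_i = z_i' for all i; moreover every element of B is of the form b₁^{z₁}⋯bₙ^{zₙ}·b with b C-free. Then: (1) the residue classes of the C-free elements of B form a K-basis of the quotient A/(b₁−1,…,bₙ−1); and (2) the set {b₁^{z₁}⋯bₙ^{zₙ}·b : z_i ∈ ℤ, b ∈ B C-free} is a K-basis of the localization A[b₁^{−1},…,bₙ^{−1}]. -/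
/-- A basis element `b i` is `C`-free (with `C = {b (c 1), …, b (c n)}`) if it does
not lie in `b (c j) · B` for any `j`. -/
def CFree {K A ι : Type*} [Field K] [CommRing A] [Algebra K A] {n : ℕ}
    (b : Module.Basis ι K A) (c : Fin n → ι) (i : ι) : Prop :=
  ∀ (j : Fin n) (i' : ι), b i ≠ b (c j) * b i'

/-- Let `B = {b i}` be a `K`-basis of the commutative `K`-algebra `A` and
`C = {b (c j) : j}`.  Assume: (i) `b (c j) · B ⊆ B`; (ii) factorizations
`∏ b(c j)^{z j} · (C-free element)` are unique, and every element of `B` has this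
form.  Then (1) the residue classes of the `C`-free basis elements form a `K`-basis
of the quotient `A/(b(c 1) − 1, …, b(c n) − 1)`; and (2) the elements
`∏ b(c j)^{z j} · b i` with `z : Fin n → ℤ` and `i` `C`-free form a `K`-basis of the
localization of `A` at `b(c 1), …, b(c n)`. -/
theorem stmt_11 {K A ι : Type*} [Field K] [CommRing A] [Algebra K A] {n : ℕ}
    (b : Module.Basis ι K A) (c : Fin n → ι)
    (hmul : ∀ (j : Fin n) (i : ι), ∃ i' : ι, b (c j) * b i = b i')
    (huniq : ∀ (z z' : Fin n → ℕ) (i i' : ι), CFree b c i → CFree b c i' →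
      (∏ j : Fin n, b (c j) ^ z j) * b i = (∏ j : Fin n, b (c j) ^ z' j) * b i' →
      i = i' ∧ z = z')
    (hform : ∀ i : ι, ∃ (z : Fin n → ℕ) (i₀ : ι), CFree b c i₀ ∧
      b i = (∏ j : Fin n, b (c j) ^ z j) * b i₀)
    (L : Type*) [CommRing L] [Algebra A L] [Algebra K L] [IsScalarTower K A L]
    [IsLocalization (Submonoid.closure (Set.range fun j : Fin n => (b (c j) : A))) L] :
    (∃ bas : Module.Basis {i : ι // CFree b c i} K
        (A ⧸ Ideal.span (Set.range fun j : Fin n => (b (c j) : A) - 1)),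
      ∀ i, bas i =
        Ideal.Quotient.mk (Ideal.span (Set.range fun j : Fin n => (b (c j) : A) - 1)) (b i.1)) ∧
    (∃ bas : Module.Basis ((Fin n → ℤ) × {i : ι // CFree b c i}) K L,
      ∀ p, bas p =
        (∏ j : Fin n,
          (((IsLocalization.map_units (M :=
              Submonoid.closure (Set.range fun j : Fin n => (b (c j) : A))) L
            ⟨b (c j), Submonoid.subset_closure ⟨j, rfl⟩⟩).unit ^ (p.1 j) : Lˣ) : L))
          * algebraMap A L (b p.2.1)) := by
  classical
  choose σ hσ using hmul
  choose zof iof hfree hfact using hform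
  have hbinj : Function.Injective b := b.injective
  set S : Submonoid A := Submonoid.closure (Set.range fun j : Fin n => (b (c j) : A))
    with hSdef
  set I : Ideal A := Ideal.span (Set.range fun j : Fin n => (b (c j) : A) - 1) with hIdef
  -- basic product computations
  have hps : ∀ j : Fin n, (∏ k : Fin n, b (c k) ^ (Pi.single j 1 : Fin n → ℕ) k) = b (c j) := by
    intro j
    rw [Finset.prod_eq_single j (fun k _ hk => by simp [Pi.single_apply, hk])
      (by simp)]
    simp
  have hshift : ∀ (z : Fin n → ℕ) (j : Fin n),
      (∏ k : Fin n, b (c k) ^ (z + Pi.single j 1 : Fin n → ℕ) k)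
        = b (c j) * ∏ k : Fin n, b (c k) ^ z k := by
    intro z j
    rw [Finset.prod_congr rfl (fun k _ =>
      (by rw [Pi.add_apply, pow_add] :
        b (c k) ^ (z + Pi.single j 1 : Fin n → ℕ) k
          = b (c k) ^ z k * b (c k) ^ (Pi.single j 1 : Fin n → ℕ) k)),
      Finset.prod_mul_distrib, hps, mul_comm]
  have hcanon : ∀ i, CFree b c i → iof i = i ∧ zof i = 0 := by
    intro i h
    exact huniq (zof i) 0 (iof i) i (hfree i) h (by rw [← hfact i]; simp)
  have hσfact : ∀ (j : Fin n) (i : ι),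
      iof (σ j i) = iof i ∧ zof (σ j i) = zof i + Pi.single j 1 := by
    intro j i
    refine huniq _ _ _ _ (hfree _) (hfree _) ?_
    rw [← hfact (σ j i), hshift, mul_assoc, ← hfact i, hσ]
  have hSmulb : ∀ x ∈ S, ∀ i : ι, ∃ i', x * b i = b i' := by
    intro x hx
    replace hx : x ∈ Submonoid.closure (Set.range fun j : Fin n => (b (c j) : A)) := hx
    induction hx using Submonoid.closure_induction with
    | mem x hx =>
      obtain ⟨j, rfl⟩ := hx
      exact fun i => ⟨σ j i, hσ j i⟩
    | one => exact fun i => ⟨i, one_mul _⟩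
    | mul x y hx hy px py =>
      intro i
      obtain ⟨i1, h1⟩ := py i
      obtain ⟨i2, h2⟩ := px i1
      exact ⟨i2, by rw [mul_assoc, h1, h2]⟩
  have hprodmem : ∀ m : Fin n → ℕ, (∏ j : Fin n, b (c j) ^ m j) ∈ S := fun m =>
    Submonoid.prod_mem _ fun j _ => Submonoid.pow_mem _ (Submonoid.subset_closure (s := Set.range fun j : Fin n => (b (c j) : A)) ⟨j, rfl⟩) _
  choose e he using fun (m : Fin n → ℕ) (i₀ : ι) => hSmulb _ (hprodmem m) i₀
  have hecanon : ∀ (m : Fin n → ℕ) (i₀ : ι), CFree b c i₀ →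
      iof (e m i₀) = i₀ ∧ zof (e m i₀) = m := by
    intro m i₀ h
    exact huniq _ _ _ _ (hfree _) h (by rw [← hfact (e m i₀), he])
  have hσinj : ∀ j : Fin n, Function.Injective (σ j) := by
    intro j i i' hEq
    have h1 := hσfact j i
    have h2 := hσfact j i'
    rw [hEq] at h1
    have hio : iof i = iof i' := h1.1.symm.trans h2.1
    have hz : zof i = zof i' := add_right_cancel (h1.2.symm.trans h2.2)
    exact hbinj (by rw [hfact i, hfact i', hio, hz])
  -- nonzerodivisors
  have hnzd : ∀ j : Fin n, b (c j) ∈ nonZeroDivisors A := by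
    intro j
    rw [mem_nonZeroDivisors_iff_right]
    intro x hx
    have hmul' : b (c j) * x = Finsupp.linearCombination K (⇑b ∘ σ j) (b.repr x) := by
      conv_lhs => rw [← b.linearCombination_repr x]
      rw [Finsupp.linearCombination_apply, Finsupp.linearCombination_apply, Finsupp.mul_sum]
      exact Finsupp.sum_congr fun i _ => by
        rw [mul_smul_comm, hσ, Function.comp_apply]
    have h0 : Finsupp.linearCombination K (⇑b ∘ σ j) (b.repr x) = 0 := by
      rw [← hmul', mul_comm, hx]
    have hli : LinearIndependent K (⇑b ∘ σ j) := b.linearIndependent.comp (σ j) (hσinj j)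
    have hr0 : b.repr x = 0 := linearIndependent_iff.mp hli _ h0
    exact b.repr.map_eq_zero_iff.mp hr0
  have hSnzd : S ≤ nonZeroDivisors A := by
    rw [hSdef]
    refine Submonoid.closure_le.mpr ?_
    rintro x ⟨j, rfl⟩
    exact hnzd j
  ----------------------------------------------------------------
  -- Part 1 : the quotient
  ----------------------------------------------------------------
  constructor
  · set φ : A →ₗ[K] ({i : ι // CFree b c i} →₀ K) :=
      b.constr K fun i => Finsupp.single ⟨iof i, hfree i⟩ 1 with hφdef
    have hφb : ∀ i : ι, φ (b i) = Finsupp.single ⟨iof i, hfree i⟩ 1 := fun i =>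
      b.constr_basis K _ i
    have hφσ : ∀ (j : Fin n) (i : ι), φ (b (σ j i)) = φ (b i) := by
      intro j i
      rw [hφb, hφb]
      congr 1
      exact Subtype.ext (hσfact j i).1
    have hφmul : ∀ (j : Fin n) (a : A), φ (a * (b (c j) - 1)) = 0 := by
      intro j a
      have hkey : φ.comp (LinearMap.mulRight K (b (c j) - 1)) = 0 := by
        apply b.ext
        intro i
        rw [LinearMap.comp_apply, LinearMap.mulRight_apply, LinearMap.zero_apply,
          mul_sub, mul_one, mul_comm (b i) (b (c j)), hσ j i, map_sub, hφσ, sub_self]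
      simpa using LinearMap.congr_fun hkey a
    have hφI : ∀ x ∈ I, φ x = 0 := by
      have key : ∀ x ∈ I, ∀ a : A, φ (a * x) = 0 := by
        intro x hx
        replace hx : x ∈ Submodule.span A
          (Set.range fun j : Fin n => (b (c j) : A) - 1) := hx
        induction hx using Submodule.span_induction with
        | mem x hxs =>
          obtain ⟨j, rfl⟩ := hxs
          exact hφmul j
        | zero => intro a; rw [mul_zero, map_zero]
        | add x y hx hy ihx ihy => intro a; rw [mul_add, map_add, ihx a, ihy a, add_zero]
        | smul r x hx ih =>
          intro a
          rw [smul_eq_mul, ← mul_assoc]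
          exact ih (a * r)
      intro x hx
      simpa using key x hx 1
    have hiofc : ∀ i₀ : {i : ι // CFree b c i},
        (⟨iof i₀.1, hfree i₀.1⟩ : {i : ι // CFree b c i}) = i₀ :=
      fun i₀ => Subtype.ext (hcanon i₀.1 i₀.2).1
    have hvli : LinearIndependent K
        (fun i₀ : {i : ι // CFree b c i} => Ideal.Quotient.mk I (b i₀.1)) := by
      rw [linearIndependent_iff]
      intro l hl
      have h1 : Ideal.Quotient.mk I
          (Finsupp.linearCombination K (fun i₀ : {i : ι // CFree b c i} => b i₀.1) l) = 0 := by
        have h2 := Finsupp.apply_linearCombination K (Ideal.Quotient.mkₐ K I).toLinearMap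
          (fun i₀ : {i : ι // CFree b c i} => b i₀.1) l
        simp only [AlgHom.toLinearMap_apply, Ideal.Quotient.mkₐ_eq_mk, Function.comp_def] at h2
        rw [h2]
        exact hl
      rw [Ideal.Quotient.eq_zero_iff_mem] at h1
      have h3 := hφI _ h1
      have h4 : Finsupp.linearCombination K
          (fun i₀ : {i : ι // CFree b c i} => Finsupp.single i₀ (1 : K)) l = l := by
        rw [Finsupp.linearCombination_apply]
        simp only [Finsupp.smul_single, smul_eq_mul, mul_one]
        exact Finsupp.sum_single l
      have h5 : φ (Finsupp.linearCombination K
          (fun i₀ : {i : ι // CFree b c i} => b i₀.1) l) = l := by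
        rw [Finsupp.apply_linearCombination]
        rw [show ⇑φ ∘ (fun i₀ : {i : ι // CFree b c i} => b i₀.1)
            = fun i₀ : {i : ι // CFree b c i} => Finsupp.single i₀ (1 : K) from
          funext fun i₀ => by rw [Function.comp_apply, hφb, hiofc]]
        exact h4
      rw [h3] at h5
      exact h5.symm
    have hmk1 : ∀ j : Fin n, Ideal.Quotient.mk I (b (c j)) = 1 := by
      intro j
      have hmem : (b (c j) : A) - 1 ∈ I := by
        rw [hIdef]
        exact Ideal.subset_span ⟨j, rfl⟩
      have h0 : Ideal.Quotient.mk I ((b (c j) : A) - 1) = 0 :=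
        Ideal.Quotient.eq_zero_iff_mem.mpr hmem
      rw [map_sub, map_one, sub_eq_zero] at h0
      exact h0
    have hmkb : ∀ i : ι, Ideal.Quotient.mk I (b i) = Ideal.Quotient.mk I (b (iof i)) := by
      intro i
      rw [hfact i, map_mul, map_prod]
      simp [map_pow, hmk1]
    have hvspan : ⊤ ≤ Submodule.span K
        (Set.range fun i₀ : {i : ι // CFree b c i} => Ideal.Quotient.mk I (b i₀.1)) := by
      intro x _
      obtain ⟨y, rfl⟩ := Ideal.Quotient.mk_surjective x
      have hy : Ideal.Quotient.mk I y =
          Finsupp.linearCombination K (fun i : ι => Ideal.Quotient.mk I (b i)) (b.repr y) := by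
        have h := Finsupp.apply_linearCombination K (Ideal.Quotient.mkₐ K I).toLinearMap
          ⇑b (b.repr y)
        simp only [AlgHom.toLinearMap_apply, Ideal.Quotient.mkₐ_eq_mk, Function.comp_def] at h
        rw [b.linearCombination_repr] at h
        exact h
      rw [hy, Finsupp.linearCombination_apply]
      refine Submodule.finsuppSum_mem _ _ _ _ fun i _ => Submodule.smul_mem _ _
        (Submodule.subset_span ?_)
      exact ⟨⟨iof i, hfree i⟩, (hmkb i).symm⟩
    refine ⟨Module.Basis.mk hvli hvspan, fun i => ?_⟩
    rw [Module.Basis.mk_apply]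
  ----------------------------------------------------------------
  -- Part 2 : the localization
  ----------------------------------------------------------------
  · have halginj : Function.Injective (algebraMap A L) := IsLocalization.injective L hSnzd
    set u : Fin n → Lˣ := fun j =>
      (IsLocalization.map_units (M := S) L
        ⟨b (c j), Submonoid.subset_closure ⟨j, rfl⟩⟩).unit with hudef
    have hu : ∀ j, (u j : L) = algebraMap A L (b (c j)) := fun j => IsUnit.unit_spec _
    set w : (Fin n → ℤ) × {i : ι // CFree b c i} → L := fun p =>
      (∏ j : Fin n, ((u j ^ p.1 j : Lˣ) : L)) * algebraMap A L (b p.2.1) with hwdef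
    have hWcoe : ∀ z : Fin n → ℤ,
        (((∏ j : Fin n, u j ^ z j : Lˣ)) : L) = ∏ j : Fin n, ((u j ^ z j : Lˣ) : L) :=
      fun z => map_prod (Units.coeHom L) _ _
    have hwW : ∀ p, w p = (((∏ j : Fin n, u j ^ p.1 j : Lˣ)) : L) * algebraMap A L (b p.2.1) := by
      intro p
      rw [hWcoe]
    have hWadd : ∀ z z' : Fin n → ℤ,
        (∏ j : Fin n, u j ^ (z j + z' j) : Lˣ)
          = (∏ j : Fin n, u j ^ z j) * (∏ j : Fin n, u j ^ z' j) := by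
      intro z z'
      rw [← Finset.prod_mul_distrib]
      exact Finset.prod_congr rfl fun j _ => zpow_add _ _ _
    have hWnat' : ∀ z : Fin n → ℤ, (∀ j, 0 ≤ z j) →
        (((∏ j : Fin n, u j ^ z j : Lˣ)) : L)
          = algebraMap A L (∏ j : Fin n, b (c j) ^ (z j).toNat) := by
      intro z hz
      rw [hWcoe, map_prod]
      refine Finset.prod_congr rfl fun j _ => ?_
      have h1 : z j = (((z j).toNat : ℤ)) := (Int.toNat_of_nonneg (hz j)).symm
      conv_lhs => rw [h1]
      rw [zpow_natCast, Units.val_pow_eq_pow_val, hu, map_pow]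
    have hWnat : ∀ m : Fin n → ℕ,
        (((∏ j : Fin n, u j ^ ((m j : ℤ)) : Lˣ)) : L)
          = algebraMap A L (∏ j : Fin n, b (c j) ^ m j) := by
      intro m
      rw [hWnat' (fun j => ((m j : ℤ))) (fun j => Int.natCast_nonneg _)]
      simp [Int.toNat_natCast]
    have hbw : ∀ i : ι, algebraMap A L (b i)
        = w (fun j => ((zof i j : ℤ)), ⟨iof i, hfree i⟩) := by
      intro i
      rw [hwW]
      show algebraMap A L (b i)
        = (((∏ j : Fin n, u j ^ ((zof i j : ℤ)) : Lˣ)) : L) * algebraMap A L (b (iof i))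
      rw [hWnat, ← map_mul, ← hfact i]
    have hWw : ∀ (ζ : Fin n → ℤ) (p),
        (((∏ j : Fin n, u j ^ ζ j : Lˣ)) : L) * w p = w (ζ + p.1, p.2) := by
      intro ζ p
      rw [hwW, hwW, ← mul_assoc, ← Units.val_mul, ← hWadd]
      rfl
    have hspanmul : ∀ (ζ : Fin n → ℤ) (a : A),
        (((∏ j : Fin n, u j ^ ζ j : Lˣ)) : L) * algebraMap A L a
          ∈ Submodule.span K (Set.range w) := by
      intro ζ a
      have ha : algebraMap A L a
          = Finsupp.linearCombination K (fun i : ι => algebraMap A L (b i)) (b.repr a) := by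
        have h := Finsupp.apply_linearCombination K (IsScalarTower.toAlgHom K A L).toLinearMap
          ⇑b (b.repr a)
        simp only [AlgHom.toLinearMap_apply, IsScalarTower.coe_toAlgHom',
          Function.comp_def] at h
        rw [b.linearCombination_repr] at h
        exact h
      rw [ha, Finsupp.linearCombination_apply, Finsupp.mul_sum]
      refine Submodule.finsuppSum_mem _ _ _ _ fun i _ => ?_
      rw [mul_smul_comm]
      refine Submodule.smul_mem _ _ (Submodule.subset_span ?_)
      rw [hbw i, hWw]
      exact ⟨_, rfl⟩
    have hmemform : ∀ s ∈ S, ∃ m : Fin n → ℕ, s = ∏ j : Fin n, b (c j) ^ m j := by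
      intro s hs
      replace hs : s ∈ Submonoid.closure (Set.range fun j : Fin n => (b (c j) : A)) := hs
      induction hs using Submonoid.closure_induction with
      | mem x hx =>
        obtain ⟨j, rfl⟩ := hx
        exact ⟨Pi.single j 1, (hps j).symm⟩
      | one => exact ⟨0, by simp⟩
      | mul x y hx hy px py =>
        obtain ⟨m1, rfl⟩ := px
        obtain ⟨m2, rfl⟩ := py
        refine ⟨m1 + m2, ?_⟩
        rw [← Finset.prod_mul_distrib]
        exact Finset.prod_congr rfl fun j _ => by rw [Pi.add_apply, pow_add]
    have hWinv : ∀ m : Fin n → ℕ,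
        (((∏ j : Fin n, u j ^ ((m j : ℤ)) : Lˣ)) : L)
          * (((∏ j : Fin n, u j ^ (-(m j : ℤ)) : Lˣ)) : L) = 1 := by
      intro m
      rw [← Units.val_mul, ← hWadd]
      simp
    have hwspan : ⊤ ≤ Submodule.span K (Set.range w) := by
      intro x _
      obtain ⟨⟨a, s⟩, hx⟩ := IsLocalization.surj S x
      obtain ⟨m, hm⟩ := hmemform s.1 s.2
      have hsW : algebraMap A L s.1 = (((∏ j : Fin n, u j ^ ((m j : ℤ)) : Lˣ)) : L) := by
        rw [hm]
        exact (hWnat m).symm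
      have hxs : x * algebraMap A L s.1 = algebraMap A L a := hx
      have hxeq : x = (((∏ j : Fin n, u j ^ (-(m j : ℤ)) : Lˣ)) : L) * algebraMap A L a := by
        calc x = x * ((((∏ j : Fin n, u j ^ ((m j : ℤ)) : Lˣ)) : L)
              * (((∏ j : Fin n, u j ^ (-(m j : ℤ)) : Lˣ)) : L)) := by rw [hWinv, mul_one]
          _ = (x * algebraMap A L s.1) * (((∏ j : Fin n, u j ^ (-(m j : ℤ)) : Lˣ)) : L) := by
              rw [← mul_assoc, hsW]
          _ = algebraMap A L a * (((∏ j : Fin n, u j ^ (-(m j : ℤ)) : Lˣ)) : L) := by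
              rw [hxs]
          _ = _ := mul_comm _ _
      rw [hxeq]
      exact hspanmul _ a
    -- linear independence
    have hwli : LinearIndependent K w := by
      rw [linearIndependent_iff]
      intro l hl
      set T : Finset ((Fin n → ℤ) × {i : ι // CFree b c i}) := l.support with hTdef
      set N : Fin n → ℕ := fun j => T.sup fun p => (-(p.1 j)).toNat with hNdef
      have hN : ∀ p ∈ T, ∀ j, 0 ≤ p.1 j + (N j : ℤ) := by
        intro p hp j
        have h1 : (-(p.1 j)).toNat ≤ N j := Finset.le_sup (f := fun p => (-(p.1 j)).toNat) hp
        have h2 : -(p.1 j) ≤ ((-(p.1 j)).toNat : ℤ) := Int.self_le_toNat _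
        omega
      set E : ((Fin n → ℤ) × {i : ι // CFree b c i}) → ι := fun p =>
        e (fun j => (p.1 j + (N j : ℤ)).toNat) p.2.1 with hEdef
      have hE : ∀ p ∈ T, (((∏ j : Fin n, u j ^ ((N j : ℤ)) : Lˣ)) : L) * w p
          = algebraMap A L (b (E p)) := by
        intro p hp
        rw [hWw, hwW]
        show (((∏ j : Fin n, u j ^ (((fun j' => ((N j' : ℤ))) + p.1) j) : Lˣ)) : L)
            * algebraMap A L (b p.2.1) = algebraMap A L (b (E p))
        rw [hWnat' ((fun j' => ((N j' : ℤ))) + p.1) (fun j => by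
          have := hN p hp j
          simp only [Pi.add_apply]
          omega)]
        rw [← map_mul]
        rw [show (∏ j : Fin n, b (c j) ^ ((((fun j' => ((N j' : ℤ))) + p.1) j).toNat))
            = ∏ j : Fin n, b (c j) ^ ((p.1 j + (N j : ℤ)).toNat) from
          Finset.prod_congr rfl fun j _ => by
            simp only [Pi.add_apply]
            rw [Int.add_comm]]
        rw [he]
      have hEinj : ∀ p ∈ T, ∀ q ∈ T, E p = E q → p = q := by
        intro p hp q hq hpq
        have h1 : iof (E p) = p.2.1 ∧ zof (E p) = fun j => (p.1 j + (N j : ℤ)).toNat :=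
          hecanon _ _ p.2.2
        have h2 : iof (E q) = q.2.1 ∧ zof (E q) = fun j => (q.1 j + (N j : ℤ)).toNat :=
          hecanon _ _ q.2.2
        rw [hpq] at h1
        have hio : p.2.1 = q.2.1 := h1.1.symm.trans h2.1
        have hz : (fun j => (p.1 j + (N j : ℤ)).toNat)
            = fun j => (q.1 j + (N j : ℤ)).toNat := h1.2.symm.trans h2.2
        have hz1 : p.1 = q.1 := by
          funext j
          have h3 := congrFun hz j
          have h4 := hN p hp j
          have h5 := hN q hq j
          omega
        exact Prod.ext hz1 (Subtype.ext hio)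
      have hsum0 : (∑ p ∈ T, l p • b (E p)) = 0 := by
        apply halginj
        rw [map_zero]
        have halg : ∀ y : A, (IsScalarTower.toAlgHom K A L).toLinearMap y
            = algebraMap A L y := fun y => rfl
        rw [← halg, map_sum]
        calc ∑ p ∈ T, (IsScalarTower.toAlgHom K A L).toLinearMap (l p • b (E p))
            = ∑ p ∈ T, l p • ((((∏ j : Fin n, u j ^ ((N j : ℤ)) : Lˣ)) : L) * w p) := by
              refine Finset.sum_congr rfl fun p hp => ?_
              rw [map_smul, halg, ← hE p hp]
          _ = (((∏ j : Fin n, u j ^ ((N j : ℤ)) : Lˣ)) : L) * ∑ p ∈ T, l p • w p := by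
              rw [Finset.mul_sum]
              exact Finset.sum_congr rfl fun p _ => (mul_smul_comm _ _ _).symm
          _ = 0 := by
              have h9 : (∑ p ∈ T, l p • w p) = Finsupp.linearCombination K w l := by
                rw [hTdef, Finsupp.linearCombination_apply]
                rfl
              rw [h9, hl, mul_zero]
      have hl'0 : ∀ p ∈ T, l p = 0 := by
        have h7 : Finsupp.linearCombination K ⇑b (∑ p ∈ T, Finsupp.single (E p) (l p)) = 0 := by
          rw [map_sum]
          calc ∑ p ∈ T, Finsupp.linearCombination K ⇑b (Finsupp.single (E p) (l p))
              = ∑ p ∈ T, l p • b (E p) :=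
                Finset.sum_congr rfl fun p _ => Finsupp.linearCombination_single K _ _
            _ = 0 := hsum0
        have h8 : (∑ p ∈ T, Finsupp.single (E p) (l p)) = (0 : ι →₀ K) :=
          linearIndependent_iff.mp b.linearIndependent _ h7
        intro p hp
        have h9 : (∑ q ∈ T, Finsupp.single (E q) (l q)) (E p) = l p := by
          rw [Finsupp.finset_sum_apply]
          rw [Finset.sum_eq_single p
            (fun q hq hqp =>
              Finsupp.single_eq_of_ne' fun hEq => hqp (hEinj q hq p hp hEq))
            (fun h => absurd hp h)]
          exact Finsupp.single_eq_same
        rw [h8] at h9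
        simpa using h9.symm
      ext p
      by_cases hp : p ∈ T
      · simpa using hl'0 p hp
      · rw [hTdef] at hp
        simpa using Finsupp.notMem_support_iff.mp hp
    refine ⟨Module.Basis.mk hwli hwspan, fun p => ?_⟩
    rw [Module.Basis.mk_apply]
end

section
/- Let A be an associative unital algebra over a field, T a left A-module, and F_T = Hom_A(T, −). Say a short exact sequence 0 → Z → Y → X → 0 of A-modules is F_T-exact if 0 → F_T(Z) → F_T(Y) → F_T(X) → 0 is exact. Let 𝒴_T be the class of modules X admitting an exact sequence ⋯ → T₁ → T₀ → X → 0 with all T_i ∈ add(T) such that all the induced short exact sequences 0 → Ker(f_i) → T_i → Im(f_i) → 0 are F_T-exact. Then the functor Hom_A(T, −): 𝒴_T → Mod(End_A(T)^op) is fully faithful; in particular, if X ∈ 𝒴_T is indecomposable then Hom_A(T, X) is an indecomposable End_A(T)^op-module, and if Hom_A(T, X) ≅ Hom_A(T, Y) for X, Y ∈ 𝒴_T then X ≅ Y. -/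
open CategoryTheory

/-- `M ∈ add T`: `M` is a direct summand of a finite direct sum of copies of `T`. -/
def MemAdd {R : Type*} [Ring R] (T M : ModuleCat R) : Prop :=
  ∃ (m : ℕ) (ι : M ⟶ ModuleCat.of R (Fin m → T)) (π : ModuleCat.of R (Fin m → T) ⟶ M),
    ι ≫ π = 𝟙 M

/-- `X ∈ 𝒴_T`: there is an exact sequence `⋯ → P₁ → P₀ → X → 0` with all `P i` in
`add T` such that all the induced short exact sequences
`0 → Ker fᵢ → Pᵢ → Im fᵢ → 0` are `F_T`-exact, i.e. every map `T → Im fᵢ` lifts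
through `fᵢ` (and every map `T → X` lifts through `p`). -/
def MemYT {R : Type*} [Ring R] (T X : ModuleCat R) : Prop :=
  ∃ (P : ℕ → ModuleCat R) (f : ∀ i, P (i + 1) ⟶ P i) (p : P 0 ⟶ X),
    (∀ i, MemAdd T (P i)) ∧
    Function.Surjective p ∧
    Function.Exact (f 0) p ∧
    (∀ i, Function.Exact (f (i + 1)) (f i)) ∧
    (∀ g : T ⟶ X, ∃ h : T ⟶ P 0, h ≫ p = g) ∧
    (∀ i, ∀ g : T ⟶ P i, (∀ x : T, ∃ y : P (i + 1), f i y = g x) →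
      ∃ h : T ⟶ P (i + 1), h ≫ f i = g)

section Aux

variable {R : Type*} [Ring R] {T X Y : ModuleCat R}

/-- Spanning for `add T`. -/
lemma memAdd_span {M : ModuleCat R} (hM : MemAdd T M) (x : M) :
    ∃ (n : ℕ) (h : Fin n → (T ⟶ M)) (t : Fin n → T), x = ∑ j, h j (t j) := by
  obtain ⟨m, ι, π, hπι⟩ := hM
  refine ⟨m, fun j =>
      ModuleCat.ofHom (LinearMap.single R (fun _ : Fin m => T) j) ≫ π,
    fun j => ι x j, ?_⟩
  have h1 : π (ι x) = x := ConcreteCategory.congr_hom hπι x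
  calc x = π (ι x) := h1.symm
    _ = π (∑ j, Pi.single j (ι x j)) := by rw [Finset.univ_sum_single]
    _ = ∑ j, π (Pi.single j (ι x j)) := map_sum (ConcreteCategory.hom π) _ _
    _ = _ := rfl

/-- Spanning for `𝒴_T`. -/
lemma memYT_span (hX : MemYT T X) (x : X) :
    ∃ (n : ℕ) (h : Fin n → (T ⟶ X)) (t : Fin n → T), x = ∑ j, h j (t j) := by
  obtain ⟨P, f, p, hadd, hsurj, -, -, -, -⟩ := hX
  obtain ⟨y, rfl⟩ := hsurj x
  obtain ⟨n, h, t, hy⟩ := memAdd_span (hadd 0) y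
  refine ⟨n, fun j => h j ≫ p, t, ?_⟩
  calc p y = p (∑ j, h j (t j)) := by rw [← hy]
    _ = ∑ j, p (h j (t j)) := map_sum (ConcreteCategory.hom p) _ _
    _ = _ := rfl

/-- Faithfulness. -/
lemma yt_faithful (hX : MemYT T X) {W : ModuleCat R} (g₁ g₂ : X ⟶ W)
    (hg : ∀ h : T ⟶ X, h ≫ g₁ = h ≫ g₂) : g₁ = g₂ := by
  apply ConcreteCategory.hom_ext
  intro x
  obtain ⟨n, h, t, rfl⟩ := memYT_span hX x
  rw [map_sum, map_sum]
  refine Finset.sum_congr rfl fun j _ => ?_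
  exact ConcreteCategory.congr_hom (hg (h j)) (t j)

/-- Fullness. -/
lemma yt_full (hX : MemYT T X) (F : (T ⟶ X) →+ (T ⟶ Y))
    (hF : ∀ (e : T ⟶ T) (h : T ⟶ X), F (e ≫ h) = e ≫ F h) :
    ∃ g : X ⟶ Y, ∀ h : T ⟶ X, F h = h ≫ g := by
  obtain ⟨P, f, p, hadd, hsurj, hexact, -, hlift, -⟩ := hX
  obtain ⟨m, ι, π, hπι⟩ := hadd 0
  -- component maps T ⟶ X
  set q : Fin m → (T ⟶ X) := fun j =>
    ModuleCat.ofHom (LinearMap.single R (fun _ : Fin m => T) j) ≫ π ≫ p with hq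
  -- the intermediate map g₀ : P 0 ⟶ Y
  set g₀ : P 0 →ₗ[R] Y :=
    { toFun := fun y => ∑ j, F (q j) (ι y j)
      map_add' := fun y y' => by
        rw [← Finset.sum_add_distrib]
        refine Finset.sum_congr rfl fun j _ => ?_
        rw [map_add (ConcreteCategory.hom ι), show (ι y + ι y') j = ι y j + ι y' j from rfl, map_add]
      map_smul' := fun r y => by
        show ∑ j, F (q j) (ι (r • y) j) = (RingHom.id R) r • ∑ j, F (q j) (ι y j)
        rw [RingHom.id_apply, map_smul (ConcreteCategory.hom ι), Finset.smul_sum]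
        exact Finset.sum_congr rfl fun j _ => by
          rw [show (r • ι y) j = r • (ι y j) from rfl, map_smul] } with hg₀
  have hg₀apply : ∀ y : P 0, g₀ y = ∑ j, F (q j) (ι y j) := fun y => rfl
  -- key: g₀ intertwines with F on maps from T
  have key : ∀ h : T ⟶ P 0, h ≫ ModuleCat.ofHom g₀ = F (h ≫ p) := by
    intro h
    apply ConcreteCategory.hom_ext
    intro t
    have step1 : g₀ (h t) = ∑ j, F ((h ≫ ι ≫ ModuleCat.ofHom (LinearMap.proj (φ := fun _ : Fin m => (T : Type _)) j)) ≫ q j) t := by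
      rw [hg₀apply]
      refine Finset.sum_congr rfl fun j _ => ?_
      rw [hF]
      rfl
    have step2 : (∑ j, (h ≫ ι ≫ ModuleCat.ofHom (LinearMap.proj (φ := fun _ : Fin m => (T : Type _)) j)) ≫ q j) = h ≫ p := by
      apply ConcreteCategory.hom_ext
      intro s
      have : (∑ j, (h ≫ ι ≫ ModuleCat.ofHom (LinearMap.proj (φ := fun _ : Fin m => (T : Type _)) j)) ≫ q j) s
          = ∑ j, p (π (Pi.single j (ι (h s) j))) := by
        change ModuleCat.Hom.hom (∑ j, _ : T ⟶ X) s = _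
        rw [ModuleCat.hom_sum, LinearMap.sum_apply]
        exact Finset.sum_congr rfl fun j _ => rfl
      rw [this, ← map_sum (ConcreteCategory.hom p), ← map_sum (ConcreteCategory.hom π), Finset.univ_sum_single]
      exact congrArg p (ConcreteCategory.congr_hom hπι (h s))
    calc (h ≫ ModuleCat.ofHom g₀) t = g₀ (h t) := rfl
      _ = ∑ j, F ((h ≫ ι ≫ ModuleCat.ofHom (LinearMap.proj (φ := fun _ : Fin m => (T : Type _)) j)) ≫ q j) t := step1
      _ = (∑ j, F ((h ≫ ι ≫ ModuleCat.ofHom (LinearMap.proj (φ := fun _ : Fin m => (T : Type _)) j)) ≫ q j)) t := by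
          change _ = ModuleCat.Hom.hom (∑ j, _ : T ⟶ Y) t
          rw [ModuleCat.hom_sum, LinearMap.sum_apply]
      _ = F (∑ j, (h ≫ ι ≫ ModuleCat.ofHom (LinearMap.proj (φ := fun _ : Fin m => (T : Type _)) j)) ≫ q j) t :=
          ConcreteCategory.congr_hom (map_sum F _ Finset.univ).symm t
      _ = F (h ≫ p) t := by rw [step2]
  -- g₀ kills the kernel of p
  have hker : ∀ y : P 0, p y = 0 → g₀ y = 0 := by
    intro y hy
    obtain ⟨z, rfl⟩ := (hexact y).mp hy
    obtain ⟨n, h, t, rfl⟩ := memAdd_span (hadd 1) z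
    have : g₀ (f 0 (∑ j, h j (t j))) = ∑ j, ((h j ≫ f 0) ≫ ModuleCat.ofHom g₀) (t j) := by
      rw [map_sum (ConcreteCategory.hom (f 0)), map_sum g₀]; rfl
    rw [this]
    refine Finset.sum_eq_zero fun j _ => ?_
    rw [key (h j ≫ f 0)]
    have h0' : (h j ≫ f 0) ≫ p = (0 : T ⟶ X) := by
      apply ConcreteCategory.hom_ext; intro s
      exact hexact.apply_apply_eq_zero (h j s)
    rw [h0', map_zero F]
    rfl
  have hwd : ∀ y y' : P 0, p y = p y' → g₀ y = g₀ y' := by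
    intro y y' hyy
    have := hker (y - y') (by rw [map_sub, hyy, sub_self])
    rw [map_sub, sub_eq_zero] at this
    exact this
  -- descend g₀ to g : X ⟶ Y
  let s : X → P 0 := Function.surjInv hsurj
  have hs : ∀ x, p (s x) = x := Function.surjInv_eq hsurj
  refine ⟨ModuleCat.ofHom
          { toFun := fun x => g₀ (s x)
            map_add' := fun x x' => by
              rw [← map_add g₀]
              exact hwd _ _ (by rw [hs, map_add, hs, hs])
            map_smul' := fun r x => by
              rw [RingHom.id_apply, ← map_smul g₀]
              exact hwd _ _ (by rw [hs, map_smul, hs]) }, ?_⟩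
  intro h
  obtain ⟨h', hh'⟩ := hlift h
  rw [← hh', ← key h']
  apply ConcreteCategory.hom_ext
  intro t
  exact (hwd _ _ (hs _)).symm

end Aux

/-- The functor `Hom_A(T, −) : 𝒴_T → Mod (End_A(T)^op)` is fully faithful: for
`X, Y ∈ 𝒴_T`, composition `g ↦ (h ↦ h ≫ g)` is injective on `Hom(X, Y)` and every
additive `End_A(T)^op`-equivariant map `Hom(T,X) → Hom(T,Y)` is of this form.  In
particular, if `X ∈ 𝒴_T` is indecomposable then `Hom_A(T, X)` is an indecomposable
`End_A(T)^op`-module, and if `Hom_A(T,X) ≅ Hom_A(T,Y)` as `End_A(T)^op`-modules for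
`X, Y ∈ 𝒴_T` then `X ≅ Y`. -/
theorem stmt_19 {R : Type*} [Ring R] (T X Y : ModuleCat R)
    (hX : MemYT T X) (hY : MemYT T Y) :
    (Function.Injective fun (g : X ⟶ Y) => fun (h : T ⟶ X) => h ≫ g) ∧
    (∀ F : (T ⟶ X) →+ (T ⟶ Y),
      (∀ (e : T ⟶ T) (h : T ⟶ X), F (e ≫ h) = e ≫ F h) →
      ∃ g : X ⟶ Y, ∀ h : T ⟶ X, F h = h ≫ g) ∧
    (((∃ x : X, x ≠ 0) ∧ ∀ e : X ⟶ X, e ≫ e = e → e = 0 ∨ e = 𝟙 X) →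
      ((∃ h : T ⟶ X, h ≠ 0) ∧
        ∀ E : (T ⟶ X) →+ (T ⟶ X),
          (∀ (e : T ⟶ T) (h : T ⟶ X), E (e ≫ h) = e ≫ E h) →
          E.comp E = E → E = 0 ∨ E = AddMonoidHom.id (T ⟶ X))) ∧
    (∀ Ψ : (T ⟶ X) ≃+ (T ⟶ Y),
      (∀ (e : T ⟶ T) (h : T ⟶ X), Ψ (e ≫ h) = e ≫ Ψ h) →
      Nonempty (X ≅ Y)) := by
  refine ⟨?_, ?_, ?_, ?_⟩
  · -- faithfulness
    intro g₁ g₂ hg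
    exact yt_faithful hX g₁ g₂ fun h => congrFun hg h
  · -- fullness
    intro F hF
    exact yt_full hX F hF
  · -- indecomposability
    rintro ⟨⟨x, hx⟩, hidem⟩
    constructor
    · by_contra hc
      push_neg at hc
      obtain ⟨n, h, t, rfl⟩ := memYT_span hX x
      exact hx (Finset.sum_eq_zero fun j _ => by rw [hc (h j)]; rfl)
    · intro E hE hEE
      obtain ⟨g, hg⟩ := yt_full hX E hE
      have hgg : g ≫ g = g := by
        apply yt_faithful hX
        intro h
        have e1 : h ≫ g ≫ g = (h ≫ g) ≫ g := (Category.assoc h g g).symm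
        have e2 : (h ≫ g) ≫ g = E (E h) := by rw [← hg (h ≫ g), ← hg h]
        have e3 : E (E h) = E h := DFunLike.congr_fun hEE h
        rw [e1, e2, e3, hg h]
      rcases hidem g hgg with h0 | h1
      · left
        apply AddMonoidHom.ext
        intro h
        rw [hg h, h0]
        exact Limits.comp_zero
      · right
        apply AddMonoidHom.ext
        intro h
        rw [hg h, h1, Category.comp_id]
        rfl
  · -- isomorphism
    intro Ψ hΨ
    obtain ⟨g, hg⟩ := yt_full hX Ψ.toAddMonoidHom hΨ
    have hΨ' : ∀ (e : T ⟶ T) (h : T ⟶ Y), Ψ.symm (e ≫ h) = e ≫ Ψ.symm h := by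
      intro e h
      apply Ψ.injective
      rw [Ψ.apply_symm_apply, hΨ, Ψ.apply_symm_apply]
    obtain ⟨g', hg'⟩ := yt_full hY Ψ.symm.toAddMonoidHom hΨ'
    have hg2 : ∀ h : T ⟶ X, Ψ h = h ≫ g := hg
    have hg'2 : ∀ h : T ⟶ Y, Ψ.symm h = h ≫ g' := hg'
    refine ⟨⟨g, g', ?_, ?_⟩⟩
    · apply yt_faithful hX
      intro h
      rw [← Category.assoc, ← hg2 h, ← hg'2 (Ψ h)]
      show Ψ.symm (Ψ h) = h ≫ 𝟙 X
      rw [Ψ.symm_apply_apply, Category.comp_id]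
    · apply yt_faithful hY
      intro h
      rw [← Category.assoc, ← hg'2 h, ← hg2 (Ψ.symm h)]
      show Ψ (Ψ.symm h) = h ≫ 𝟙 Y
      rw [Ψ.apply_symm_apply, Category.comp_id]
end
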